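/- There are infinitely many odd integers k such that k divides the sum of the first k nonzero Fibonacci numbers, i.e., the set {k odd : k ∣ ∑_{i=1}^k F_i} is infinite. -/

import Mathlib

open Polynomial Nat

lemma no_root (p : ℕ) (h5 : ¬ IsSquare (5 : ZMod p)) :
    ∀ r : ZMod p, r^2 ≠ r + 1 := by
  intro r hr
  exact h5 ⟨2*r - 1, by linear_combination (-4:ZMod p)*hr⟩

lemma five_not_square (p : ℕ) [hp : Fact p.Prime] (hp2 : p ≠ 2)
    (hp5 : p % 5 = 2 ∨ p % 5 = 3) :
    ¬ IsSquare (5 : ZMod p) := by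
  have d2 : ¬ IsSquare ((2:ℕ) : ZMod 5) := by decide
  have d3 : ¬ IsSquare ((3:ℕ) : ZMod 5) := by decide
  haveI : Fact (Nat.Prime 5) := ⟨by norm_num⟩
  have h := ZMod.exists_sq_eq_prime_iff_of_mod_four_eq_one (p := 5) (q := p)
      (by norm_num) hp2
  have hcast : ((5 : ℕ) : ZMod p) = (5 : ZMod p) := by push_cast; ring
  rw [hcast] at h
  rw [← h]
  have h2 : ((p : ℕ) : ZMod 5) = ((p % 5 : ℕ) : ZMod 5) := (ZMod.natCast_mod p 5).symm
  rw [h2]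
  rcases hp5 with h' | h' <;> rw [h']
  · exact d2
  · exact d3

lemma cassini (n : ℕ) : (Nat.fib (n+1) : ℤ)^2 = Nat.fib (n+2) * Nat.fib n + (-1)^n := by
  induction n with
  | zero => simp
  | succ n ih =>
    have h2 : (Nat.fib (n+2) : ℤ) = Nat.fib n + Nat.fib (n+1) := by
      rw [Nat.fib_add_two]; push_cast; ring
    have h3 : (Nat.fib (n+3) : ℤ) = Nat.fib (n+1) + Nat.fib (n+2) := by
      rw [show n+3 = (n+1)+2 from rfl, Nat.fib_add_two]; push_cast; ring
    rw [h3]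
    push_cast [pow_succ] at ih ⊢
    nlinarith [ih]


lemma fib_prime_mod (p : ℕ) [hp : Fact p.Prime]
    (h5 : ∀ r : ZMod p, r^2 ≠ r + 1) :
    ((fib p : ZMod p) = -1) ∧ ((fib (p+1) : ZMod p) = 0) := by
  have hp1 : 1 ≤ p := hp.out.one_lt.le
  set f : (ZMod p)[X] := X^2 - X - 1 with hf
  have hmonic : f.Monic := by unfold f; monicity!
  have hndeg : f.natDegree = 2 := by unfold f; compute_degree!
  have hirr : Irreducible f := by
    rw [hmonic.irreducible_iff_roots_eq_zero_of_degree_le_three (by omega) (by omega)]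
    rw [Multiset.eq_zero_iff_forall_notMem]
    intro r hr
    rw [Polynomial.mem_roots hmonic.ne_zero] at hr
    apply h5 r
    simp only [hf, IsRoot, eval_sub, eval_pow, eval_X, eval_one] at hr
    linear_combination hr
  haveI : Fact (Irreducible f) := ⟨hirr⟩
  set K := AdjoinRoot f with hK
  set α : K := AdjoinRoot.root f with hα0
  have hα : α^2 = α + 1 := by
    have h0 : (Polynomial.aeval α) f = 0 := by
      rw [AdjoinRoot.aeval_eq, AdjoinRoot.mk_self]
    simp only [hf, map_sub, map_pow, Polynomial.aeval_X, map_one] at h0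
    linear_combination h0
  have hinj : Function.Injective (algebraMap (ZMod p) K) :=
    (algebraMap (ZMod p) K).injective
  haveI : CharP K p := charP_of_injective_algebraMap hinj p
  have hroot_base : ∀ r : ZMod p, α ≠ algebraMap (ZMod p) K r := by
    intro r hr
    apply h5 r
    apply hinj
    rw [map_pow, map_add, map_one, ← hr]
    exact hα
  have binet : ∀ n : ℕ, α ^ (n+1) = (fib (n+1) : K) * α + (fib n : K) := by
    intro n
    induction n with
    | zero => simp
    | succ n ih =>
      rw [pow_succ, ih, fib_add_two]
      push_cast
      linear_combination ((fib (n+1) : K)) * hα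
  have hfrob : (α^p)^2 = α^p + 1 := by
    have h0 : α^2 - α - 1 = 0 := by linear_combination hα
    have h1 : (α^2 - α - 1)^p = 0 := by rw [h0]; exact zero_pow hp.out.ne_zero
    rw [sub_pow_char, sub_pow_char, ← pow_mul, mul_comm 2 p, pow_mul, one_pow] at h1
    linear_combination h1
  have hcase : α^p = α ∨ α^p = 1 - α := by
    have h2 : (α^p - α) * (α^p - (1 - α)) = 0 := by
      linear_combination hfrob - hα
    rcases mul_eq_zero.mp h2 with h | h
    · exact Or.inl (sub_eq_zero.mp h)
    · exact Or.inr (sub_eq_zero.mp h)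
  rcases hcase with hc | hc
  · exfalso
    set g : K[X] := X^p - X with hg
    have hgdeg : g.natDegree = p := by
      unfold g
      rw [Polynomial.natDegree_sub_eq_left_of_natDegree_lt, natDegree_X_pow]
      rw [natDegree_X, natDegree_X_pow]
      exact hp.out.one_lt
    have hgne : g ≠ 0 := by
      intro h0
      rw [h0, natDegree_zero] at hgdeg
      omega
    set S : Finset K := Finset.univ.image (algebraMap (ZMod p) K) ∪ {α} with hS
    have hcard : S.card = p + 1 := by
      rw [hS, Finset.union_comm, ← Finset.insert_eq,
        Finset.card_insert_of_notMem, Finset.card_image_of_injective _ hinj]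
      · simp [ZMod.card]
      · intro hmem
        rcases Finset.mem_image.mp hmem with ⟨r, _, hr⟩
        exact hroot_base r hr.symm
    have hsub : S ⊆ g.roots.toFinset := by
      intro x hx
      rw [Multiset.mem_toFinset, Polynomial.mem_roots hgne]
      rw [hS, Finset.mem_union] at hx
      rcases hx with hx | hx
      · rcases Finset.mem_image.mp hx with ⟨r, _, hr⟩
        simp only [hg, IsRoot, eval_sub, eval_pow, eval_X]
        rw [← hr, ← map_pow, ZMod.pow_card, sub_self]
      · simp only [Finset.mem_singleton] at hx
        simp only [hg, IsRoot, eval_sub, eval_pow, eval_X]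
        rw [hx, hc, sub_self]
    have hle := Finset.card_le_card hsub
    have h2 := Multiset.toFinset_card_le g.roots
    have h3 := Polynomial.card_roots' g
    omega
  · have hb := binet (p-1)
    rw [Nat.sub_add_cancel hp1] at hb
    rw [hc] at hb
    have hcast1 : (fib p : K) = algebraMap (ZMod p) K (fib p : ZMod p) :=
      (map_natCast _ _).symm
    have hcast2 : (fib (p-1) : K) = algebraMap (ZMod p) K (fib (p-1) : ZMod p) :=
      (map_natCast _ _).symm
    rw [hcast1, hcast2] at hb
    set a : ZMod p := (fib p : ZMod p) with ha0
    set b : ZMod p := (fib (p-1) : ZMod p) with hb0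
    have heq : algebraMap (ZMod p) K (a + 1) * α = algebraMap (ZMod p) K (1 - b) := by
      rw [map_add, map_one, map_sub, map_one]
      linear_combination -hb
    have ha : a = -1 := by
      by_contra hne
      have hne' : a + 1 ≠ 0 := fun h0 => hne (by linear_combination h0)
      have : algebraMap (ZMod p) K ((a+1)⁻¹ * (1-b)) = α := by
        rw [map_mul, ← heq, ← mul_assoc, ← map_mul, inv_mul_cancel₀ hne', map_one, one_mul]
      exact hroot_base _ this.symm
    have hbone : b = 1 := by
      have h0 : algebraMap (ZMod p) K (1 - b) = algebraMap (ZMod p) K 0 := by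
        rw [map_zero, ← heq, ha]
        simp
      have := hinj h0
      linear_combination -this
    refine ⟨ha, ?_⟩
    have e1 : p - 1 + 2 = p + 1 := by omega
    have e2 : p - 1 + 1 = p := by omega
    have hfib : fib (p+1) = fib (p-1) + fib p := by
      rw [← e1, fib_add_two, e2]
    rw [hfib]
    push_cast
    rw [← ha0, ← hb0, ha, hbone]
    ring


-- fib mod 4 periodicity along 6t+4
lemma fib_mod_four (t : ℕ) : fib (6*t + 4) % 4 = 3 := by
  induction t with
  | zero => decide
  | succ t ih =>
    have h : fib (6*t + 4 + 5 + 1) = fib (6*t+4) * fib 5 + fib (6*t+4+1) * fib 6 :=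
      Nat.fib_add (6*t+4) 5
    have e : 6*(t+1) + 4 = 6*t + 4 + 5 + 1 := by ring
    rw [e, h]
    simp only [show fib 5 = 5 from rfl, show fib 6 = 8 from rfl]
    omega

-- sum identity
lemma sum_fib_eq (k : ℕ) : ∑ i ∈ Finset.Icc 1 k, fib i = fib (k+2) - 1 := by
  induction k with
  | zero => simp
  | succ k ih =>
    rw [Finset.sum_Icc_succ_top (by omega : 1 ≤ k + 1), ih]
    have h1 : fib (k+3) = fib (k+1) + fib (k+2) := Nat.fib_add_two
    have h2 : 1 ≤ fib (k+2) := Nat.fib_pos.mpr (by omega)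
    have e : k + 1 + 2 = k + 3 := by ring
    rw [e, h1]
    omega

-- power lemma: fib (s*n + 1) ≡ fib(n+1)^s mod fib n
lemma fib_pow_mod (n : ℕ) : ∀ s : ℕ,
    ((fib (s*n + 1) : ZMod (fib n)) = (fib (n+1) : ZMod (fib n))^s) := by
  intro s
  induction s with
  | zero => simp
  | succ s ih =>
    have h : fib (s*n + n + 1) = fib (s*n) * fib n + fib (s*n+1) * fib (n+1) :=
      Nat.fib_add (s*n) n
    have e : (s+1)*n + 1 = s*n + n + 1 := by ring
    rw [e, h]
    push_cast
    rw [ZMod.natCast_self]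
    rw [ih]
    ring

lemma key (p : ℕ) (hp : p.Prime) (h30 : p % 30 = 17) :
    Odd (fib (2*p)) ∧ fib (2*p) ∣ fib (fib (2*p) + 2) - 1 := by
  haveI : Fact p.Prime := ⟨hp⟩
  have hp2 : p ≠ 2 := by omega
  have hp5 : p % 5 = 2 := by omega
  obtain ⟨hfp, hfp1⟩ := fib_prime_mod p (no_root p (five_not_square p hp2 (Or.inl hp5)))
  -- p ∣ fib (2p) + 1
  have hple : 2 ≤ p := hp.two_le
  have hdvd_p : p ∣ fib (2*p) + 1 := by
    have hle : fib p ≤ 2 * fib (p+1) := le_trans fib_le_fib_succ (by omega)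
    have h2m : fib (2*p) = fib p * (2 * fib (p+1) - fib p) := fib_two_mul p
    have : ((fib (2*p) + 1 : ℕ) : ZMod p) = 0 := by
      push_cast [h2m, Nat.cast_sub hle]
      rw [hfp, hfp1]
      ring
    exact (ZMod.natCast_eq_zero_iff _ p).mp this
  -- mod 4
  obtain ⟨u, hu⟩ : ∃ u, 2*p = 6*u + 4 := ⟨(2*p - 4)/6, by omega⟩
  have hmod4 : fib (2*p) % 4 = 3 := by rw [hu]; exact fib_mod_four u
  have hdvd4 : 4 ∣ fib (2*p) + 1 := by omega
  have hcop : Nat.Coprime 4 p := by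
    have h2 : Nat.Coprime 2 p := by
      rw [Nat.coprime_primes Nat.prime_two hp]
      omega
    exact Nat.Coprime.pow_left 2 h2
  have hdvd : 4*p ∣ fib (2*p) + 1 := hcop.mul_dvd_of_dvd_of_dvd hdvd4 hdvd_p
  obtain ⟨t, ht⟩ := hdvd
  set k := fib (2*p) with hk
  have hodd : Odd k := by rw [Nat.odd_iff]; omega
  refine ⟨hodd, ?_⟩
  haveI : NeZero k := ⟨by omega⟩
  have hk2 : (fib (k+2) : ZMod k) = 1 := by
    have e : k + 2 = (2*t)*(2*p) + 1 := by
      have h4 : 4*p*t = 2*t*(2*p) := by ring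
      omega
    rw [e, fib_pow_mod (2*p) (2*t)]
    have hcas : (fib (2*p+1) : ZMod k)^2 = 1 := by
      have hc := cassini (2*p)
      have hc2 : ((fib (2*p+1) : ℤ)^2 : ZMod k) = ((fib (2*p+2) * fib (2*p) + (-1)^(2*p) : ℤ) : ZMod k) := by
        exact_mod_cast congrArg (Int.cast : ℤ → ZMod k) hc
      push_cast at hc2
      rw [hk] at hc2 ⊢
      rw [ZMod.natCast_self] at hc2
      rw [hc2]
      simp [pow_mul]
    rw [pow_mul, hcas, one_pow]
  have h1 : 1 ≤ fib (k+2) := Nat.fib_pos.mpr (by omega)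
  have : ((fib (k+2) - 1 : ℕ) : ZMod k) = 0 := by
    rw [Nat.cast_sub h1, hk2]
    simp
  exact (ZMod.natCast_eq_zero_iff _ k).mp this

theorem stmt_17 :
    {k : ℕ | Odd k ∧ k ∣ ∑ i ∈ Finset.Icc 1 k, Nat.fib i}.Infinite := by
  have hdir : {p : ℕ | p.Prime ∧ (p : ZMod 30) = 17}.Infinite :=
    Nat.infinite_setOfPred_prime_and_eq_mod (by decide)
  have hinj : Set.InjOn (fun p => fib (2*p)) {p : ℕ | p.Prime ∧ (p : ZMod 30) = 17} := by
    intro a ha b hb hab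
    simp only [Set.mem_setOf_eq] at ha hb hab
    by_contra hne
    rcases Nat.lt_or_ge a b with h | h
    · have := (Nat.fib_lt_fib (by have := ha.1.two_le; omega)).mpr
        (by omega : 2*a < 2*b)
      omega
    · have := (Nat.fib_lt_fib (by have := hb.1.two_le; omega)).mpr
        (by omega : 2*b < 2*a)
      omega
  refine (hdir.image hinj).mono ?_
  rintro k ⟨p, hp, rfl⟩
  simp only [Set.mem_setOf_eq] at hp ⊢
  have h30 : p % 30 = 17 := by
    have : ((p : ℕ) : ZMod 30) = ((17 : ℕ) : ZMod 30) := by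
      rw [hp.2]; norm_num
    have h2 := (ZMod.natCast_eq_natCast_iff p 17 30).mp this
    have h3 : p % 30 = 17 % 30 := h2
    omega
  obtain ⟨ho, hd⟩ := key p hp.1 h30
  refine ⟨ho, ?_⟩
  rw [sum_fib_eq]
  exact hd
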